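/- Under assumptions (A1)–(A6), the map m := m̂|_{S⁺} : S⁺ → N, where S⁺ = {u ∈ X⁺ : ‖u‖ = 1}, is a homeomorphism from S⁺ onto the Nehari–Pankov manifold N (both with the norm topology), whose inverse is the map N → S⁺, v ↦ v⁺/‖v⁺‖. -/

import Mathlib

open Filter Topology


set_option maxHeartbeats 1000000
set_option synthInstance.maxHeartbeats 400000

section Aux

variable {X : Type*} [NormedAddCommGroup X] [NormedSpace ℝ X]

/-- A continuous functional vanishing on a closed subspace but not at a given outside point. -/
lemma aux_sep (Z : Submodule ℝ X) (hZ : IsClosed (Z : Set X)) {x : X} (hx : x ∉ Z) :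
    ∃ f : X →L[ℝ] ℝ, (∀ y ∈ Z, f y = 0) ∧ f x ≠ 0 := by
  obtain ⟨f, u, hfu, hux⟩ := geometric_hahn_banach_closed_point Z.convex hZ hx
  have hvan : ∀ y ∈ Z, f y = 0 := by
    intro y hy
    by_contra hfy
    have h1 : ∀ t : ℝ, t * f y < u := fun t => by
      simpa [map_smul, smul_eq_mul] using hfu (t • y) (Z.smul_mem t hy)
    have := h1 ((u + 1) / f y)
    rw [div_mul_cancel₀ _ hfy] at this; linarith
  have h0 : (0 : ℝ) < u := by simpa using hfu 0 Z.zero_mem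
  exact ⟨f, hvan, (h0.trans hux).ne'⟩

/-- Weak sequential compactness of bounded sequences in a reflexive Banach space. -/
lemma aux_weak_seq (hrefl : Function.Surjective (NormedSpace.inclusionInDoubleDual ℝ X))
    (v : ℕ → X) (M : ℝ) (hM : ∀ n, ‖v n‖ ≤ M) :
    ∃ (σ : ℕ → ℕ) (w : X), StrictMono σ ∧
      ∀ ψ : X →L[ℝ] ℝ, Tendsto (fun n => ψ (v (σ n))) atTop (𝓝 (ψ w)) := by
  classical
  set ι := NormedSpace.inclusionInDoubleDual ℝ X with hι
  have hnormι : ∀ x : X, ‖ι x‖ = ‖x‖ := fun x =>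
    (NormedSpace.inclusionInDoubleDualLi ℝ (E := X)).norm_map x
  set Z := (Submodule.span ℝ (Set.range v)).topologicalClosure with hZdef
  have hZcl : IsClosed (Z : Set X) := Submodule.isClosed_topologicalClosure _
  have hvZ : ∀ n, v n ∈ Z := fun n =>
    Submodule.le_topologicalClosure _ (Submodule.subset_span ⟨n, rfl⟩)
  have hsepZ : TopologicalSpace.IsSeparable (Z : Set X) := by
    have h1 := ((Set.countable_range v).isSeparable).span (R := ℝ)
    have h2 := h1.closure
    rwa [← Submodule.topologicalClosure_coe] at h2
  obtain ⟨c, hc_cnt, hc_sub⟩ := hsepZ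
  have hcne : c.Nonempty := by
    rcases c.eq_empty_or_nonempty with h | h
    · exfalso
      rw [h, closure_empty] at hc_sub
      exact hc_sub Z.zero_mem
    · exact h
  obtain ⟨g, hg⟩ := hc_cnt.exists_eq_range hcne
  -- a countable norming family of functionals on `Z`
  have hφex : ∀ j : ℕ, ∃ f : X →L[ℝ] ℝ, ‖f‖ ≤ 1 ∧ (g j ≠ 0 → f (g j) = ‖g j‖) := by
    intro j
    by_cases h : g j = 0
    · exact ⟨0, by simp, fun h' => absurd h h'⟩
    · obtain ⟨f, hf1, hf2⟩ := exists_dual_vector ℝ (g j) (norm_ne_zero_iff.mpr h)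
      exact ⟨f, le_of_eq hf1, fun _ => by simpa using hf2⟩
  choose φ hφ1 hφ2 using hφex
  have hnorming : ∀ z ∈ Z, z ≠ 0 → ∃ j, φ j z ≠ 0 := by
    intro z hz hz0
    have hzc : z ∈ closure c := hc_sub hz
    have hz3 : 0 < ‖z‖ / 3 := div_pos (norm_pos_iff.mpr hz0) (by norm_num)
    obtain ⟨y, hyc, hyd⟩ := Metric.mem_closure_iff.mp hzc (‖z‖ / 3) hz3
    obtain ⟨j, rfl⟩ : ∃ j, y = g j := by
      have h' : y ∈ Set.range g := hg ▸ hyc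
      obtain ⟨j, hj⟩ := h'; exact ⟨j, hj.symm⟩
    have hdist : ‖z - g j‖ < ‖z‖ / 3 := by rwa [dist_eq_norm] at hyd
    have hyl : 2 * ‖z‖ / 3 < ‖g j‖ := by
      have h1 : ‖z‖ ≤ ‖z - g j‖ + ‖g j‖ := by
        simpa using norm_add_le (z - g j) (g j)
      linarith
    have hy0 : g j ≠ 0 := by
      intro h; rw [h, norm_zero] at hyl
      have : 0 ≤ ‖z‖ := norm_nonneg z
      nlinarith [norm_pos_iff.mpr hz0]
    have hval : φ j (g j) = ‖g j‖ := hφ2 j hy0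
    have hb : |φ j (z - g j)| ≤ ‖z - g j‖ := by
      calc |φ j (z - g j)| ≤ ‖φ j‖ * ‖z - g j‖ := (φ j).le_opNorm _
        _ ≤ 1 * ‖z - g j‖ := by
            have := norm_nonneg (z - g j)
            exact mul_le_mul_of_nonneg_right (hφ1 j) this
        _ = ‖z - g j‖ := one_mul _
    refine ⟨j, ?_⟩
    have heq : φ j z = ‖g j‖ + φ j (z - g j) := by
      rw [← hval, ← map_add]
      congr 1
      abel
    have hzpos : 0 < ‖z‖ := norm_pos_iff.mpr hz0
    have habs := abs_le.mp hb
    have : 0 < φ j z := by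
      rw [heq]
      have h2 : -(‖z‖/3) ≤ φ j (z - g j) := by linarith [habs.1, hdist.le]
      linarith
    exact this.ne'
  -- move to the bidual with its weak-star topology
  let D := WeakDual ℝ (StrongDual ℝ X)
  let ιD : X → D := fun x => WeakDual.toStrongDual.symm (ι x)
  have hιD_apply : ∀ (x : X) (f : X →L[ℝ] ℝ), (ιD x) f = f x := fun x f => rfl
  let B_M : Set D := WeakDual.toStrongDual ⁻¹' Metric.closedBall 0 M
  have hB : IsCompact B_M := WeakDual.isCompact_closedBall (𝕜 := ℝ) (E := StrongDual ℝ X) 0 M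
  let A : Set D := {x'' | ∀ f : X →L[ℝ] ℝ, (∀ y ∈ Z, f y = 0) → x'' f = 0}
  have hAcl : IsClosed A := by
    have : A = ⋂ f ∈ {f : X →L[ℝ] ℝ | ∀ y ∈ Z, f y = 0}, {x'' : D | x'' f = 0} := by
      ext x''; simp [A]
    rw [this]
    exact isClosed_biInter fun f _ =>
      isClosed_eq (WeakDual.eval_continuous f) continuous_const
  have hmemA : ∀ n, ιD (v n) ∈ A := fun n f hf => by
    rw [hιD_apply]; exact hf (v n) (hvZ n)
  have hmemB : ∀ n, ιD (v n) ∈ B_M := by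
    intro n
    have : ‖ι (v n)‖ ≤ M := by rw [hnormι]; exact hM n
    have h2 : ι (v n) ∈ Metric.closedBall (0 : StrongDual ℝ (StrongDual ℝ X)) M := by
      rw [Metric.mem_closedBall]; exact (dist_zero_right (ι (v n))).le.trans this
    exact h2
  let K : Set D := B_M ∩ A
  have hK : IsCompact K := hB.inter_right hAcl
  haveI : CompactSpace K := isCompact_iff_compactSpace.mp hK
  -- the preimage under the double-dual inclusion of any element of `K`
  have hKrep : ∀ k : K, ∃ x : X, x ∈ Z ∧ ι x = WeakDual.toStrongDual (k : D) := by
    rintro ⟨k, hkB, hkA⟩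
    obtain ⟨x, hx⟩ := hrefl (WeakDual.toStrongDual k)
    refine ⟨x, ?_, hx⟩
    by_contra hxZ
    obtain ⟨f, hfvan, hfx⟩ := aux_sep Z hZcl hxZ
    have h1 : k f = 0 := hkA f hfvan
    have h2 : (WeakDual.toStrongDual k) f = f x := by rw [← hx]; rfl
    rw [WeakDual.toStrongDual_apply] at h2
    exact hfx (by rw [← h2, h1])
  -- embed `K` into a metrizable space via the norming family
  let Φ : K → (ℕ → ℝ) := fun k j => (k : D) (φ j)
  have hΦc : Continuous Φ :=
    continuous_pi fun j => (WeakDual.eval_continuous (φ j)).comp continuous_subtype_val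
  have hΦi : Function.Injective Φ := by
    intro k₁ k₂ hk
    obtain ⟨x₁, hx₁Z, hx₁⟩ := hKrep k₁
    obtain ⟨x₂, hx₂Z, hx₂⟩ := hKrep k₂
    have hxeq : x₁ = x₂ := by
      by_contra hne
      have hsub : x₁ - x₂ ∈ Z := Z.sub_mem hx₁Z hx₂Z
      obtain ⟨j, hj⟩ := hnorming (x₁ - x₂) hsub (sub_ne_zero.mpr hne)
      apply hj
      have h1 : (k₁ : D) (φ j) = (k₂ : D) (φ j) := congrFun hk j
      have e1 : (k₁ : D) (φ j) = φ j x₁ := by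
        rw [← WeakDual.toStrongDual_apply, ← hx₁]; rfl
      have e2 : (k₂ : D) (φ j) = φ j x₂ := by
        rw [← WeakDual.toStrongDual_apply, ← hx₂]; rfl
      rw [map_sub, sub_eq_zero]
      rw [e1, e2] at h1
      exact h1
    apply Subtype.ext
    have : WeakDual.toStrongDual (k₁ : D) = WeakDual.toStrongDual (k₂ : D) := by
      rw [← hx₁, ← hx₂, hxeq]
    exact WeakDual.toStrongDual.injective this
  have hemb := hΦc.isClosedEmbedding hΦi
  haveI : SecondCountableTopology K :=
    hemb.toIsEmbedding.toIsInducing.secondCountableTopology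
  -- extract a convergent subsequence in `K`
  let kseq : ℕ → K := fun n => ⟨ιD (v n), hmemB n, hmemA n⟩
  obtain ⟨a, -, σ, hσ, ha⟩ :=
    IsCompact.tendsto_subseq (isCompact_univ (X := K)) (fun n => Set.mem_univ (kseq n))
  have hDconv : Tendsto (fun n => ((kseq (σ n)) : D)) atTop (𝓝 (a : D)) :=
    (continuous_subtype_val.tendsto a).comp ha
  obtain ⟨w, hwZ, hw⟩ := hKrep a
  refine ⟨σ, w, hσ, fun ψ => ?_⟩
  have hconv := ((WeakDual.eval_continuous ψ).tendsto (a : D)).comp hDconv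
  have e3 : ∀ n, ((kseq (σ n)) : D) ψ = ψ (v (σ n)) := fun n => rfl
  have e4 : (a : D) ψ = ψ w := by
    rw [← WeakDual.toStrongDual_apply, ← hw]; rfl
  simp only [Function.comp_def, e3, e4] at hconv
  exact hconv

end Aux

/-- Under (A1)–(A6), `m := m̂|_{S⁺} : S⁺ → N` is a homeomorphism from the
unit sphere `S⁺` of `X⁺` onto the Nehari–Pankov manifold `N`, with inverse `v ↦ v⁺/‖v⁺‖`. -/
theorem nehari_homeomorphism
    {X : Type*} [NormedAddCommGroup X] [NormedSpace ℝ X] [CompleteSpace X]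
    -- X is reflexive
    (hrefl : Function.Surjective (NormedSpace.inclusionInDoubleDual ℝ X))
    -- topological direct sum decomposition X = X⁺ ⊕ X̃, with projection P onto X⁺ along X̃
    (Xp Xt : Submodule ℝ X)
    (hXpcl : IsClosed (Xp : Set X)) (hXtcl : IsClosed (Xt : Set X))
    (P : X →L[ℝ] X)
    (hPm : ∀ x : X, P x ∈ Xp) (hQm : ∀ x : X, x - P x ∈ Xt)
    (hPp : ∀ x ∈ Xp, P x = x) (hPt : ∀ x ∈ Xt, P x = 0)
    -- ‖u‖² = ‖u⁺‖² + ‖ũ‖²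
    (hnorm : ∀ x : X, ‖x‖ ^ 2 = ‖P x‖ ^ 2 + ‖x - P x‖ ^ 2)
    -- u ↦ ‖u‖² is C¹ on X⁺
    (hC1 : ContDiffOn ℝ 1 (fun x : X => ‖x‖ ^ 2) (Xp : Set X))
    -- J, I of class C¹ with J(u) = ½‖u⁺‖² - I(u)
    (J I : X → ℝ) (J' I' : X → X →L[ℝ] ℝ)
    (hJd : ∀ x, HasFDerivAt J (J' x) x) (hJ'c : Continuous J')
    (hId : ∀ x, HasFDerivAt I (I' x) x) (hI'c : Continuous I')
    (hJI : ∀ x : X, J x = (1 / 2) * ‖P x‖ ^ 2 - I x)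
    -- (A1)
    (hI0 : I 0 = 0) (hIpos : ∀ x : X, 0 ≤ I x)
    -- (A2) : T-convergence implies liminf I(uₙ) ≥ I(v)
    (hA2 : ∀ (u : ℕ → X) (v : X),
      Tendsto (fun n => P (u n)) atTop (𝓝 (P v)) →
      (∀ φ : X →L[ℝ] ℝ, Tendsto (fun n => φ (u n - P (u n))) atTop (𝓝 (φ (v - P v)))) →
      ∀ b : ℝ, b < I v → ∀ᶠ n in atTop, b < I (u n))
    -- (A3)
    (hA3 : ∀ (u : ℕ → X) (v : X),
      Tendsto (fun n => P (u n)) atTop (𝓝 (P v)) →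
      (∀ φ : X →L[ℝ] ℝ, Tendsto (fun n => φ (u n - P (u n))) atTop (𝓝 (φ (v - P v)))) →
      Tendsto (fun n => I (u n)) atTop (𝓝 (I v)) →
      Tendsto u atTop (𝓝 v))
    -- (A4)
    (r a : ℝ) (hr : 0 < r)
    (ha_def : a = sInf (J '' {x : X | x ∈ Xp ∧ ‖x‖ = r})) (ha : 0 < a)
    -- (A5) : m̂(u) is the unique nontrivial critical point of J|_{X(u)} in X̂(u), and the
    -- unique global maximum of J on X̂(u)
    (m : X → X)
    (hm_mem : ∀ u ∉ Xt, ∃ t : ℝ, 0 ≤ t ∧ ∃ v ∈ Xt, m u = t • u + v)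
    (hm_ne : ∀ u ∉ Xt, m u ≠ 0)
    (hm_crit : ∀ u ∉ Xt, ∀ z : X, (∃ t : ℝ, ∃ v ∈ Xt, z = t • u + v) → J' (m u) z = 0)
    (hm_unique : ∀ u ∉ Xt, ∀ w : X, (∃ t : ℝ, 0 ≤ t ∧ ∃ v ∈ Xt, w = t • u + v) → w ≠ 0 →
      (∀ z : X, (∃ t : ℝ, ∃ v ∈ Xt, z = t • u + v) → J' w z = 0) → w = m u)
    (hm_max : ∀ u ∉ Xt, ∀ w : X, (∃ t : ℝ, 0 ≤ t ∧ ∃ v ∈ Xt, w = t • u + v) →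
      w ≠ m u → J w < J (m u))
    -- (A6)
    (δ : ℝ) (hδ : 0 < δ) (hm_lb : ∀ u ∉ Xt, δ ≤ ‖P (m u)‖)
    (hm_bdd : ∀ K : Set X, IsCompact K → (∀ x ∈ K, x ∉ Xt) →
      Bornology.IsBounded (m '' K))
    :
    (∀ u ∈ {u : X | u ∈ Xp ∧ ‖u‖ = 1}, m u ∈ {u : X | u ∉ Xt ∧ J' u u = 0 ∧ ∀ v ∈ Xt, J' u v = 0}) ∧
    ContinuousOn m {u : X | u ∈ Xp ∧ ‖u‖ = 1} ∧
    (∀ v ∈ {u : X | u ∉ Xt ∧ J' u u = 0 ∧ ∀ v ∈ Xt, J' u v = 0}, ‖P v‖⁻¹ • P v ∈ {u : X | u ∈ Xp ∧ ‖u‖ = 1}) ∧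
    ContinuousOn (fun v : X => ‖P v‖⁻¹ • P v) {u : X | u ∉ Xt ∧ J' u u = 0 ∧ ∀ v ∈ Xt, J' u v = 0} ∧
    (∀ u ∈ {u : X | u ∈ Xp ∧ ‖u‖ = 1}, ‖P (m u)‖⁻¹ • P (m u) = u) ∧
    (∀ v ∈ {u : X | u ∉ Xt ∧ J' u u = 0 ∧ ∀ v ∈ Xt, J' u v = 0}, m (‖P v‖⁻¹ • P v) = v) := by
  classical
  -- basic facts
  have hS_not_Xt : ∀ u : X, u ∈ Xp → ‖u‖ = 1 → u ∉ Xt := by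
    intro u h1 h2 hXt
    have e1 : P u = u := hPp u h1
    have e2 : P u = 0 := hPt u hXt
    rw [e1] at e2
    rw [e2, norm_zero] at h2
    norm_num at h2
  have hPv_ne : ∀ v : X, v ∉ Xt → P v ≠ 0 := by
    intro v hv h0
    apply hv
    have := hQm v
    rwa [h0, sub_zero] at this
  have hJc : Continuous J := continuous_iff_continuousAt.mpr fun x => (hJd x).continuousAt
  -- Part 1 : m maps S⁺ into N
  have part1 : ∀ u ∈ {u : X | u ∈ Xp ∧ ‖u‖ = 1},
      m u ∈ {u : X | u ∉ Xt ∧ J' u u = 0 ∧ ∀ v ∈ Xt, J' u v = 0} := by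
    rintro u ⟨h1, h2⟩
    have hu := hS_not_Xt u h1 h2
    have hlb := hm_lb u hu
    obtain ⟨t, ht0, vt, hvt, hdec⟩ := hm_mem u hu
    refine ⟨?_, ?_, ?_⟩
    · intro h
      rw [hPt (m u) h, norm_zero] at hlb
      linarith
    · exact hm_crit u hu (m u) ⟨t, vt, hvt, hdec⟩
    · intro z hz
      exact hm_crit u hu z ⟨0, z, hz, by rw [zero_smul, zero_add]⟩
  -- Part 3 : the inverse map sends N into S⁺
  have part3 : ∀ v ∈ {u : X | u ∉ Xt ∧ J' u u = 0 ∧ ∀ v ∈ Xt, J' u v = 0},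
      ‖P v‖⁻¹ • P v ∈ {u : X | u ∈ Xp ∧ ‖u‖ = 1} := by
    rintro v ⟨hv, -, -⟩
    have hPv := hPv_ne v hv
    have hn : ‖P v‖ ≠ 0 := norm_ne_zero_iff.mpr hPv
    exact ⟨Xp.smul_mem _ (hPm v), by rw [norm_smul, norm_inv, norm_norm, inv_mul_cancel₀ hn]⟩
  -- Part 4 : continuity of the inverse map
  have part4 : ContinuousOn (fun v : X => ‖P v‖⁻¹ • P v)
      {u : X | u ∉ Xt ∧ J' u u = 0 ∧ ∀ v ∈ Xt, J' u v = 0} := by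
    rintro v ⟨hv, -, -⟩
    have hn : ‖P v‖ ≠ 0 := norm_ne_zero_iff.mpr (hPv_ne v hv)
    exact ((P.continuous.norm.continuousAt.inv₀ hn).smul P.continuous.continuousAt).continuousWithinAt
  -- Part 5 : left inverse
  have part5 : ∀ u ∈ {u : X | u ∈ Xp ∧ ‖u‖ = 1}, ‖P (m u)‖⁻¹ • P (m u) = u := by
    rintro u ⟨h1, h2⟩
    have hu := hS_not_Xt u h1 h2
    obtain ⟨t, ht0, vt, hvt, hdec⟩ := hm_mem u hu
    have hPmu : P (m u) = t • u := by
      rw [hdec, map_add, map_smul, hPp u h1, hPt vt hvt, add_zero]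
    have hnP : ‖P (m u)‖ = t := by
      rw [hPmu, norm_smul, h2, mul_one, Real.norm_eq_abs, abs_of_nonneg ht0]
    have ht_ne : t ≠ 0 := by
      have := hm_lb u hu
      rw [hnP] at this
      linarith
    rw [hnP, hPmu, smul_smul, inv_mul_cancel₀ ht_ne, one_smul]
  -- Part 6 : right inverse
  have part6 : ∀ v ∈ {u : X | u ∉ Xt ∧ J' u u = 0 ∧ ∀ v ∈ Xt, J' u v = 0},
      m (‖P v‖⁻¹ • P v) = v := by
    rintro v ⟨hvXt, hJ'vv, hJ'Xt⟩
    have hPv := hPv_ne v hvXt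
    have hn : ‖P v‖ ≠ 0 := norm_ne_zero_iff.mpr hPv
    have hu₀Xp : ‖P v‖⁻¹ • P v ∈ Xp := Xp.smul_mem _ (hPm v)
    have hu₀n : ‖(‖P v‖⁻¹ • P v)‖ = 1 := by
      rw [norm_smul, norm_inv, norm_norm, inv_mul_cancel₀ hn]
    have hu₀ : ‖P v‖⁻¹ • P v ∉ Xt := hS_not_Xt _ hu₀Xp hu₀n
    have hform : ∃ t : ℝ, 0 ≤ t ∧ ∃ z ∈ Xt, v = t • (‖P v‖⁻¹ • P v) + z := by
      refine ⟨‖P v‖, norm_nonneg _, v - P v, hQm v, ?_⟩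
      rw [smul_smul, mul_inv_cancel₀ hn, one_smul]
      abel
    have hv0 : v ≠ 0 := fun h => hvXt (h ▸ Xt.zero_mem)
    have hcrit : ∀ z : X, (∃ t : ℝ, ∃ vt ∈ Xt, z = t • (‖P v‖⁻¹ • P v) + vt) → J' v z = 0 := by
      rintro z ⟨t, vt, hvt, rfl⟩
      have hPv0 : J' v (P v) = 0 := by
        have h2 : J' v (v - P v) = 0 := hJ'Xt _ (hQm v)
        have h3 : J' v (P v) = J' v v - J' v (v - P v) := by
          rw [← map_sub]
          congr 1
          abel
        rw [h3, hJ'vv, h2, sub_zero]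
      rw [map_add, map_smul, map_smul, hPv0]
      rw [hJ'Xt vt hvt]
      simp
    exact (hm_unique _ hu₀ v hform hv0 hcrit).symm
  -- Part 2 : continuity of m on S⁺ (the hard part)
  have key : ∀ u : X, u ∈ Xp → ‖u‖ = 1 → ∀ y : ℕ → X, (∀ n, y n ∈ Xp ∧ ‖y n‖ = 1) →
      Tendsto y atTop (𝓝 u) →
      ∃ ms : ℕ → ℕ, Tendsto (fun n => m (y (ms n))) atTop (𝓝 (m u)) := by
    intro u hu1 hu2 y hyS hyu
    have hu_not := hS_not_Xt u hu1 hu2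
    have hyn_not : ∀ n, y n ∉ Xt := fun n => hS_not_Xt _ (hyS n).1 (hyS n).2
    -- boundedness of m along the sequence
    have hKc : IsCompact (insert u (Set.range y)) := hyu.isCompact_insert_range
    have hKnot : ∀ x ∈ insert u (Set.range y), x ∉ Xt := by
      rintro x hx
      rcases Set.mem_insert_iff.mp hx with rfl | ⟨n, rfl⟩
      · exact hu_not
      · exact hyn_not n
    obtain ⟨M₀, hM₀⟩ := isBounded_iff_forall_norm_le.mp (hm_bdd _ hKc hKnot)
    have hbd : ∀ n, ‖m (y n)‖ ≤ M₀ := fun n =>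
      hM₀ _ ⟨y n, Set.mem_insert_of_mem _ ⟨n, rfl⟩, rfl⟩
    -- decompositions
    choose t ht0 vt hvtXt hdec using fun n => hm_mem (y n) (hyn_not n)
    obtain ⟨tu, htu0, vu, hvuXt, hdecu⟩ := hm_mem u hu_not
    have hPy : ∀ n, P (m (y n)) = t n • y n := fun n => by
      rw [hdec n, map_add, map_smul, hPp _ (hyS n).1, hPt _ (hvtXt n), add_zero]
    have htval : ∀ n, t n = ‖P (m (y n))‖ := fun n => by
      rw [hPy n, norm_smul, (hyS n).2, mul_one, Real.norm_eq_abs, abs_of_nonneg (ht0 n)]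
    have htub : ∀ n, t n ≤ ‖P‖ * M₀ := fun n => by
      rw [htval n]
      exact le_trans (P.le_opNorm _) (mul_le_mul_of_nonneg_left (hbd n) (norm_nonneg (P : X →L[ℝ] X)))
    have htlb : ∀ n, δ ≤ t n := fun n => by
      rw [htval n]; exact hm_lb _ (hyn_not n)
    have hvt_eq : ∀ n, vt n = m (y n) - t n • y n := fun n => by rw [hdec n]; abel
    have hvt_bd : ∀ n, ‖vt n‖ ≤ M₀ + ‖P‖ * M₀ := fun n => by
      rw [hvt_eq n]
      calc ‖m (y n) - t n • y n‖ ≤ ‖m (y n)‖ + ‖t n • y n‖ := norm_sub_le _ _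
        _ ≤ M₀ + ‖P‖ * M₀ := by
            have : ‖t n • y n‖ = t n := by
              rw [norm_smul, (hyS n).2, mul_one, Real.norm_eq_abs, abs_of_nonneg (ht0 n)]
            rw [this]
            exact add_le_add (hbd n) (htub n)
    -- extract a weakly convergent subsequence of the tilde parts
    obtain ⟨σ₁, wt, hσ₁, hweak⟩ := aux_weak_seq hrefl vt (M₀ + ‖P‖ * M₀) hvt_bd
    -- extract a convergent subsequence of the coefficients
    obtain ⟨t₀, ht₀mem, σ₂, hσ₂, htconv⟩ :=
      tendsto_subseq_of_bounded (Metric.isBounded_Icc δ (‖P‖ * M₀))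
        (x := fun n => t (σ₁ n)) (fun n => ⟨htlb _, htub _⟩)
    rw [isClosed_Icc.closure_eq] at ht₀mem
    have ht₀0 : 0 ≤ t₀ := le_trans hδ.le ht₀mem.1
    set ms : ℕ → ℕ := σ₁ ∘ σ₂ with hms_def
    have hms_mono : StrictMono ms := hσ₁.comp hσ₂
    have hweak' : ∀ ψ : X →L[ℝ] ℝ, Tendsto (fun n => ψ (vt (ms n))) atTop (𝓝 (ψ wt)) :=
      fun ψ => (hweak ψ).comp hσ₂.tendsto_atTop
    have htconv' : Tendsto (fun n => t (ms n)) atTop (𝓝 t₀) := htconv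
    -- the weak limit of the tilde parts lies in Xt
    have hwtXt : wt ∈ Xt := by
      by_contra h
      obtain ⟨f, hfvan, hfw⟩ := aux_sep Xt hXtcl h
      have hz : ∀ n, f (vt (ms n)) = 0 := fun n => hfvan _ (hvtXt _)
      have h1 : Tendsto (fun n => f (vt (ms n))) atTop (𝓝 (f wt)) := hweak' f
      simp only [hz] at h1
      exact hfw (tendsto_nhds_unique h1 tendsto_const_nhds)
    set w : X := t₀ • u + wt with hw_def
    have hPw : P w = t₀ • u := by
      rw [hw_def, map_add, map_smul, hPp u hu1, hPt wt hwtXt, add_zero]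
    have hwsub : w - P w = wt := by rw [hPw, hw_def]; abel
    set q : ℕ → X := fun n => m (y (ms n)) with hq_def
    have hPq : ∀ n, P (q n) = t (ms n) • y (ms n) := fun n => hPy (ms n)
    have hqsub : ∀ n, q n - P (q n) = vt (ms n) := fun n => by
      rw [hPq n, hvt_eq (ms n)]
    have hyms : Tendsto (fun n => y (ms n)) atTop (𝓝 u) := hyu.comp hms_mono.tendsto_atTop
    have hPconv : Tendsto (fun n => P (q n)) atTop (𝓝 (P w)) := by
      rw [hPw]
      simp only [hPq]
      exact htconv'.smul hyms
    have hTweak : ∀ ψ : X →L[ℝ] ℝ,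
        Tendsto (fun n => ψ (q n - P (q n))) atTop (𝓝 (ψ (w - P w))) := by
      intro ψ
      simp only [hqsub, hwsub]
      exact hweak' ψ
    -- comparison from below : J(q n) ≥ J(tu • y + vu) → J(m u)
    have hcomp1 : ∀ n, J (tu • y (ms n) + vu) ≤ J (q n) := by
      intro n
      by_cases h : tu • y (ms n) + vu = m (y (ms n))
      · exact le_of_eq (congrArg J h)
      · exact (hm_max _ (hyn_not _) _ ⟨tu, htu0, vu, hvuXt, rfl⟩ h).le
    have hcomp1lim : Tendsto (fun n => J (tu • y (ms n) + vu)) atTop (𝓝 (J (m u))) := by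
      have h1 : Tendsto (fun n => tu • y (ms n) + vu) atTop (𝓝 (tu • u + vu)) :=
        (tendsto_const_nhds.smul hyms).add tendsto_const_nhds
      have h2 := (hJc.tendsto _).comp h1
      rwa [← hdecu] at h2
    -- w lies in the half space over u
    have hwform : ∃ s : ℝ, 0 ≤ s ∧ ∃ z ∈ Xt, w = s • u + z := ⟨t₀, ht₀0, wt, hwtXt, rfl⟩
    have hJwle : J w ≤ J (m u) := by
      by_cases h : w = m u
      · rw [h]
      · exact (hm_max u hu_not w hwform h).le
    have hnPw : ‖P w‖ = t₀ := by
      rw [hPw, norm_smul, hu2, mul_one, Real.norm_eq_abs, abs_of_nonneg ht₀0]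
    have hIw : I w = 1 / 2 * t₀ ^ 2 - J w := by
      have := hJI w
      rw [hnPw] at this
      linarith
    have hIq : ∀ n, I (q n) = 1 / 2 * (t (ms n)) ^ 2 - J (q n) := by
      intro n
      have h1 := hJI (q n)
      have h2 : ‖P (q n)‖ = t (ms n) := (htval (ms n)).symm
      rw [h2] at h1
      linarith
    have hupper : ∀ n, I (q n) ≤ 1 / 2 * (t (ms n)) ^ 2 - J (tu • y (ms n) + vu) := by
      intro n
      have := hcomp1 n
      rw [hIq n]
      linarith
    have hupperlim : Tendsto (fun n => 1 / 2 * (t (ms n)) ^ 2 - J (tu • y (ms n) + vu))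
        atTop (𝓝 (1 / 2 * t₀ ^ 2 - J (m u))) :=
      (tendsto_const_nhds.mul (htconv'.pow 2)).sub hcomp1lim
    -- identify the weak limit with m u
    have hweq : w = m u := by
      by_contra hne
      have hJlt : J w < J (m u) := hm_max u hu_not w hwform hne
      have hcI : 1 / 2 * t₀ ^ 2 - J (m u) < I w := by rw [hIw]; linarith
      set b : ℝ := (1 / 2 * t₀ ^ 2 - J (m u) + I w) / 2 with hb_def
      have hb1 : 1 / 2 * t₀ ^ 2 - J (m u) < b := by rw [hb_def]; linarith
      have hb2 : b < I w := by rw [hb_def]; linarith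
      have hev1 : ∀ᶠ n in atTop, b < I (q n) := hA2 q w hPconv hTweak b hb2
      have hev2 : ∀ᶠ n in atTop,
          1 / 2 * (t (ms n)) ^ 2 - J (tu • y (ms n) + vu) < b :=
        hupperlim.eventually_lt_const hb1
      obtain ⟨n, hn1, hn2⟩ := (hev1.and hev2).exists
      have := hupper n
      linarith
    -- convergence of I along the subsequence
    have hIconv : Tendsto (fun n => I (q n)) atTop (𝓝 (I w)) := by
      rw [tendsto_order]
      constructor
      · intro b hb
        exact hA2 q w hPconv hTweak b hb
      · intro b hb
        have hlimval : 1 / 2 * t₀ ^ 2 - J (m u) = I w := by rw [hIw, hweq]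
        have hev := hupperlim.eventually_lt_const (by rw [hlimval]; exact hb)
        exact hev.mono fun n h => lt_of_le_of_lt (hupper n) h
    have hfin := hA3 q w hPconv hTweak hIconv
    rw [hweq] at hfin
    exact ⟨ms, hfin⟩
  have part2 : ContinuousOn m {u : X | u ∈ Xp ∧ ‖u‖ = 1} := by
    rintro u ⟨hu1, hu2⟩
    have : Tendsto m (𝓝[{u : X | u ∈ Xp ∧ ‖u‖ = 1}] u) (𝓝 (m u)) := by
      apply tendsto_iff_seq_tendsto.mpr
      intro x hx
      have hxu : Tendsto x atTop (𝓝 u) := hx.mono_right nhdsWithin_le_nhds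
      have hxS : ∀ᶠ n in atTop, x n ∈ {u : X | u ∈ Xp ∧ ‖u‖ = 1} :=
        hx.eventually eventually_mem_nhdsWithin
      apply tendsto_of_subseq_tendsto
      intro ns hns
      obtain ⟨N, hN⟩ := eventually_atTop.mp (hns.eventually hxS)
      have hyS : ∀ n : ℕ, x (ns (n + N)) ∈ Xp ∧ ‖x (ns (n + N))‖ = 1 := fun n =>
        hN (n + N) (Nat.le_add_left N n)
      have hyu : Tendsto (fun n => x (ns (n + N))) atTop (𝓝 u) :=
        (hxu.comp hns).comp (tendsto_add_atTop_nat N)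
      obtain ⟨ms, hms⟩ := key u hu1 hu2 (fun n => x (ns (n + N))) hyS hyu
      exact ⟨fun n => ms n + N, hms⟩
    exact this
  exact ⟨part1, part2, part3, part4, part5, part6⟩
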